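/- Let (N,c) be a TU cost game and let x be an allocation maximizing x(N) over the almost core. Then for every i ∈ N there exists a proper subset S ⊊ N with i ∈ S and x(S) = c(S); consequently x_i ≥ -∑_{j∈N} c({j}) for all i ∈ N. -/
import Mathlib


open Finset

/-- If x maximizes x(N) over the almost core, then for every i there is a
tight proper coalition S ∋ i with x(S) = c(S); consequently x_i ≥ -∑_j c({j}). -/
theorem optimal_almost_core_tight_and_bounded {n : ℕ} (hn : 2 ≤ n)
    (c : Finset (Fin n) → ℝ) (hc : ∀ S, 0 ≤ c S)
    (x : Fin n → ℝ)
    (hfeas : ∀ S : Finset (Fin n), S ⊂ univ → ∑ i ∈ S, x i ≤ c S)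
    (hopt : ∀ y : Fin n → ℝ,
      (∀ S : Finset (Fin n), S ⊂ univ → ∑ i ∈ S, y i ≤ c S) →
      ∑ i, y i ≤ ∑ i, x i) :
    (∀ i : Fin n, ∃ S : Finset (Fin n), S ⊂ univ ∧ i ∈ S ∧ ∑ j ∈ S, x j = c S) ∧
    (∀ i : Fin n, -(∑ j : Fin n, c {j}) ≤ x i) := by
  have hsing : ∀ j : Fin n, ({j} : Finset (Fin n)) ⊂ univ := by
    intro j
    rw [Finset.ssubset_univ_iff]
    intro h
    have := congrArg Finset.card h
    simp [Finset.card_univ] at this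
    omega
  have htight : ∀ i : Fin n, ∃ S : Finset (Fin n), S ⊂ univ ∧ i ∈ S ∧ ∑ j ∈ S, x j = c S := by
    intro i
    by_contra hno
    push_neg at hno
    set T : Finset (Finset (Fin n)) :=
      univ.filter (fun S => S ⊂ univ ∧ i ∈ S) with hT
    have hiT : ({i} : Finset (Fin n)) ∈ T := by
      simp [hT, hsing i]
    have hTne : T.Nonempty := ⟨_, hiT⟩
    set ε : ℝ := T.inf' hTne (fun S => c S - ∑ j ∈ S, x j) with hε
    have hεpos : 0 < ε := by
      rw [hε, Finset.lt_inf'_iff]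
      intro S hS
      simp only [hT, Finset.mem_filter] at hS
      have := hfeas S hS.2.1
      have hne := hno S hS.2.1 hS.2.2
      have : ∑ j ∈ S, x j < c S := lt_of_le_of_ne this hne
      linarith
    set y : Fin n → ℝ := fun j => x j + (if j = i then ε else 0) with hy
    have hsum : ∀ S : Finset (Fin n),
        ∑ j ∈ S, y j = (∑ j ∈ S, x j) + (if i ∈ S then ε else 0) := by
      intro S
      simp only [hy, Finset.sum_add_distrib, Finset.sum_ite_eq' S i (fun _ => ε)]
    have hyfeas : ∀ S : Finset (Fin n), S ⊂ univ → ∑ j ∈ S, y j ≤ c S := by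
      intro S hS
      rw [hsum]
      by_cases hiS : i ∈ S
      · have : ε ≤ c S - ∑ j ∈ S, x j := by
          rw [hε]
          exact Finset.inf'_le _ (by simp [hT, hS, hiS])
        simp [hiS]; linarith
      · simpa [hiS] using hfeas S hS
    have := hopt y hyfeas
    rw [hsum univ] at this
    simp at this
    linarith
  refine ⟨htight, ?_⟩
  intro i
  obtain ⟨S, hS, hiS, heq⟩ := htight i
  have hsplit : ∑ j ∈ S, x j = x i + ∑ j ∈ S.erase i, x j :=
    (Finset.add_sum_erase S x hiS).symm
  have hle : ∑ j ∈ S.erase i, x j ≤ ∑ j : Fin n, c {j} := by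
    calc ∑ j ∈ S.erase i, x j ≤ ∑ j ∈ S.erase i, c {j} := by
          apply Finset.sum_le_sum
          intro j _
          simpa using hfeas {j} (hsing j)
      _ ≤ ∑ j : Fin n, c {j} := by
          apply Finset.sum_le_sum_of_subset_of_nonneg (Finset.subset_univ _)
          intro j _ _
          exact hc _
  have := hc S
  linarith [heq ▸ hsplit]
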